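/- Let μ be a non-atomic Borel probability measure whose topological support is exactly F, where F is a fractal subset of [0,1] satisfying the lacunarity condition with constant λ ∈ (0,1]. Let q ∈ ℝ, a ≥ 2/λ and b > 0. Then there exist constants η₁, η₂, c₁, c₂ > 0 and r₀ > 0 such that for all 0 < r ≤ r₀: c₁ · Σ_{n : λη₁r ≤ |I_n| ≤ η₁r} μ(Ī_n^a)^q ≤ Σ_{B ∈ B_r^*} μ(B̄^b)^q ≤ c₂ · Σ_{n : λη₂r ≤ |I_n| ≤ η₂r} μ(Ī_n^a)^q. -/

import Mathlib

open MeasureTheory Filter Set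
open scoped Classical

noncomputable section

/-- The enlargement `B̄^a` of the interval `[s,t]` by the factor `1+a` about its centre. -/
def enlarge (a s t : ℝ) : Set ℝ :=
  Set.Icc (s - a * (t - s) / 2) (t + a * (t - s) / 2)

/-- The moment sum `Σ_{B ∈ B_r^*} μ(B̄^a)^q` over grid intervals of length `r`
whose interior meets the support of `μ` (i.e. with `μ(B) > 0`). -/
def gridSum (μ : Measure ℝ) (a q R : ℝ) : ℝ :=
  ∑' m : ℤ, if 0 < μ (Set.Icc ((m : ℝ) * R) (((m : ℝ) + 1) * R))
    then (μ (enlarge a ((m : ℝ) * R) (((m : ℝ) + 1) * R))).toReal ^ q else 0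

/-- The coarse multifractal moment function
`β_a(q) = inf{β : limsup_{r→0⁺} r^β Σ_{B ∈ B_r^*} μ(B̄^a)^q = 0}`.
(For the nonnegative quantity `r^β · Σ…`, vanishing of the `limsup` as `r → 0⁺`
is the same as convergence to `0`.) -/
def betaA (μ : Measure ℝ) (a q : ℝ) : ℝ :=
  sInf {β : ℝ | Filter.Tendsto (fun R => R ^ β * gridSum μ a q R)
    (nhdsWithin 0 (Set.Ioi 0)) (nhds 0)}

/-- `F` is a "fractal subset" of `[0,1]`: compact, Lebesgue-null, containing `0` and `1`. -/
def IsFractalSubset (F : Set ℝ) : Prop :=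
  IsCompact F ∧ F ⊆ Set.Icc 0 1 ∧ (0 : ℝ) ∈ F ∧ (1 : ℝ) ∈ F ∧ MeasureTheory.volume F = 0

/-- The complementary intervals `I_n = (l n, r n)` of `F` in `[0,1]`, enumerated with
nonincreasing lengths. -/
structure FractalComplement (F : Set ℝ) where
  l : ℕ → ℝ
  r : ℕ → ℝ
  lt : ∀ n, l n < r n
  disj : Pairwise fun n m => Disjoint (Set.Ioo (l n) (r n)) (Set.Ioo (l m) (r m))
  union : (⋃ n, Set.Ioo (l n) (r n)) = Set.Icc (0 : ℝ) 1 \ F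
  mono : ∀ n, r (n + 1) - l (n + 1) ≤ r n - l n

/-- The length `|I_n|` of the `n`-th complementary interval. -/
def FractalComplement.len {F : Set ℝ} (c : FractalComplement F) (n : ℕ) : ℝ := c.r n - c.l n

/-- The enlargement `Ī_n^a` of the closure of the complementary interval `I_n`. -/
def FractalComplement.I {F : Set ℝ} (c : FractalComplement F) (a : ℝ) (n : ℕ) : Set ℝ :=
  enlarge a (c.l n) (c.r n)

/-- The lacunarity condition with constant `lam`: every interval `[x-r, x+r]` with `x ∈ F`
and `0 < r ≤ 1` contains a complementary interval of length at least `lam * r`. -/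
def Lacunary {F : Set ℝ} (c : FractalComplement F) (lam : ℝ) : Prop :=
  ∀ x ∈ F, ∀ R : ℝ, 0 < R → R ≤ 1 → ∃ n,
    Set.Ioo (c.l n) (c.r n) ⊆ Set.Icc (x - R) (x + R) ∧ lam * R ≤ c.len n

/-- The topological support of `μ` is exactly `F`. -/
def HasSupport (μ : Measure ℝ) (F : Set ℝ) : Prop :=
  μ Fᶜ = 0 ∧ ∀ x ∈ F, ∀ ε : ℝ, 0 < ε → 0 < μ (Set.Ioo (x - ε) (x + ε))


lemma ioo_sub_icc {u v p q : ℝ} (huv : u < v) (h : Set.Ioo u v ⊆ Set.Icc p q) :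
    p ≤ u ∧ v ≤ q := by
  constructor
  · by_contra hpu
    push_neg at hpu
    have h1 : u < min v p := lt_min huv hpu
    have ht : (u + min v p) / 2 ∈ Set.Ioo u v := by
      constructor
      · linarith
      · have : min v p ≤ v := min_le_left _ _
        linarith
    have h2 := (h ht).1
    have h3 : min v p ≤ p := min_le_right _ _
    linarith
  · by_contra hq
    push_neg at hq
    have h1 : max u q < v := max_lt huv hq
    have ht : (max u q + v) / 2 ∈ Set.Ioo u v := by
      constructor
      · have : u ≤ max u q := le_max_left _ _
        linarith
      · linarith
    have h2 := (h ht).2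
    have h3 : q ≤ max u q := le_max_right _ _
    linarith

lemma tsum_ite {α : Type*} (P : α → Prop) [DecidablePred P] (hfin : {x | P x}.Finite) (f : α → ℝ) :
    (∑' x, if P x then f x else 0) = ∑ x ∈ hfin.toFinset, f x := by
  have h0 : ∀ x ∉ hfin.toFinset, (if P x then f x else 0) = 0 := by
    intro x hx
    exact if_neg (fun h => hx (hfin.mem_toFinset.2 h))
  rw [tsum_eq_sum h0]
  exact Finset.sum_congr rfl fun x hx => if_pos (hfin.mem_toFinset.1 hx)

lemma map_sum_le {ι κ : Type*} (s : Finset ι) (t : Finset κ) (f : ι → ℝ) (g : κ → ℝ)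
    (φ : ι → κ) (hmem : ∀ i ∈ s, φ i ∈ t) (hle : ∀ i ∈ s, f i ≤ g (φ i))
    (hg : ∀ j ∈ t, 0 ≤ g j) (M : ℝ)
    (hM : ∀ j ∈ t, ∀ s' : Finset ι, s' ⊆ s → (∀ i ∈ s', φ i = j) → ((s'.card : ℝ) ≤ M)) :
    ∑ i ∈ s, f i ≤ M * ∑ j ∈ t, g j := by
  have h1 : ∑ i ∈ s, f i ≤ ∑ i ∈ s, g (φ i) := Finset.sum_le_sum hle
  have h2 : ∑ i ∈ s, g (φ i) = ∑ j ∈ t, ∑ i ∈ s.filter fun i => φ i = j, g (φ i) :=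
    (Finset.sum_fiberwise_of_maps_to hmem _).symm
  have h3 : ∀ j ∈ t, (∑ i ∈ s.filter (fun i => φ i = j), g (φ i)) ≤ M * g j := by
    intro j hj
    have : (∑ i ∈ s.filter (fun i => φ i = j), g (φ i))
        = ((s.filter fun i => φ i = j).card : ℝ) * g j := by
      rw [Finset.sum_congr rfl (fun i hi => by rw [(Finset.mem_filter.1 hi).2]),
        Finset.sum_const, nsmul_eq_mul]
    rw [this]
    exact mul_le_mul_of_nonneg_right
      (hM j hj _ (Finset.filter_subset _ _) (fun i hi => (Finset.mem_filter.1 hi).2))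
      (hg j hj)
  calc ∑ i ∈ s, f i ≤ ∑ j ∈ t, ∑ i ∈ s.filter fun i => φ i = j, g (φ i) := by
        rw [← h2]; exact h1
    _ ≤ ∑ j ∈ t, M * g j := Finset.sum_le_sum h3
    _ = M * ∑ j ∈ t, g j := (Finset.mul_sum _ _ _).symm

lemma double_sum_le {κ : Type*} (G : Finset ℤ) (T : Finset κ) (N : ℤ → Finset κ)
    (v : κ → ℝ) (hsub : ∀ m ∈ G, N m ⊆ T) (hv : ∀ j ∈ T, 0 ≤ v j) (M : ℝ)
    (hM : ∀ j ∈ T, ∀ G' : Finset ℤ, G' ⊆ G → (∀ m ∈ G', j ∈ N m) → ((G'.card : ℝ) ≤ M)) :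
    ∑ m ∈ G, ∑ j ∈ N m, v j ≤ M * ∑ j ∈ T, v j := by
  have h1 : ∀ m ∈ G, (∑ j ∈ N m, v j) = ∑ j ∈ T, if j ∈ N m then v j else 0 := by
    intro m hm
    rw [Finset.sum_ite_mem, Finset.inter_eq_right.2 (hsub m hm)]
  calc ∑ m ∈ G, ∑ j ∈ N m, v j = ∑ m ∈ G, ∑ j ∈ T, if j ∈ N m then v j else 0 :=
        Finset.sum_congr rfl h1
    _ = ∑ j ∈ T, ∑ m ∈ G, if j ∈ N m then v j else 0 := Finset.sum_comm
    _ ≤ ∑ j ∈ T, M * v j := by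
        refine Finset.sum_le_sum fun j hj => ?_
        have : (∑ m ∈ G, if j ∈ N m then v j else 0)
            = ((G.filter fun m => j ∈ N m).card : ℝ) * v j := by
          rw [← Finset.sum_filter, Finset.sum_const, nsmul_eq_mul]
        rw [this]
        exact mul_le_mul_of_nonneg_right
          (hM j hj _ (Finset.filter_subset _ _) (fun m hm => (Finset.mem_filter.1 hm).2))
          (hv j hj)
    _ = M * ∑ j ∈ T, v j := (Finset.mul_sum _ _ _).symm

lemma int_count (s : Finset ℤ) (x y : ℝ) (hxy : x ≤ y)
    (h : ∀ m ∈ s, x ≤ (m : ℝ) ∧ (m : ℝ) ≤ y) :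
    (s.card : ℝ) ≤ y - x + 1 := by
  have hsub : s ⊆ Finset.Icc ⌈x⌉ ⌊y⌋ := fun m hm => Finset.mem_Icc.2
    ⟨Int.ceil_le.2 (h m hm).1, Int.le_floor.2 (h m hm).2⟩
  have hc := Finset.card_le_card hsub
  rw [Int.card_Icc] at hc
  have h1 : ((⌊y⌋ + 1 - ⌈x⌉).toNat : ℝ) ≤ y - x + 1 := by
    have hfl := Int.floor_le y
    have hcl := Int.le_ceil x
    rcases le_or_gt (⌊y⌋ + 1 - ⌈x⌉) 0 with hz0 | hz0
    · rw [Int.toNat_of_nonpos hz0]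
      push_cast
      linarith
    · have he : ((⌊y⌋ + 1 - ⌈x⌉).toNat : ℤ) = ⌊y⌋ + 1 - ⌈x⌉ := Int.toNat_of_nonneg hz0.le
      have h2 : (((⌊y⌋ + 1 - ⌈x⌉).toNat : ℤ) : ℝ) ≤ y - x + 1 := by
        rw [he]; push_cast; linarith
      exact_mod_cast h2
  calc (s.card : ℝ) ≤ ((⌊y⌋ + 1 - ⌈x⌉).toNat : ℝ) := by exact_mod_cast hc
    _ ≤ y - x + 1 := h1
section FCHelpers

variable {F : Set ℝ} (c : FractalComplement F)

lemma FC.Ioo_sub (n : ℕ) : Set.Ioo (c.l n) (c.r n) ⊆ Set.Icc 0 1 \ F := by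
  rw [← c.union]
  exact Set.subset_iUnion (fun n => Set.Ioo (c.l n) (c.r n)) n

lemma FC.bounds (n : ℕ) : 0 ≤ c.l n ∧ c.r n ≤ 1 :=
  ioo_sub_icc (c.lt n) ((FC.Ioo_sub c n).trans Set.diff_subset)

lemma FC.len_pos (n : ℕ) : 0 < c.len n := sub_pos.2 (c.lt n)

lemma FC.notMem {x : ℝ} (hx : x ∈ F) (n : ℕ) : x ∉ Set.Ioo (c.l n) (c.r n) :=
  fun hx' => ((FC.Ioo_sub c n) hx').2 hx

lemma FC.left_mem (n : ℕ) : c.l n ∈ F := by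
  by_contra hl
  have hb := FC.bounds c n
  have hmem : c.l n ∈ Set.Icc (0:ℝ) 1 \ F :=
    ⟨⟨hb.1, le_trans (le_of_lt (c.lt n)) hb.2⟩, hl⟩
  rw [← c.union] at hmem
  obtain ⟨k, hk⟩ := Set.mem_iUnion.1 hmem
  have hkn : k ≠ n := by
    rintro rfl
    exact lt_irrefl _ hk.1
  have h1 : c.l n < min (c.r k) (c.r n) := lt_min hk.2 (c.lt n)
  have hmk : min (c.r k) (c.r n) ≤ c.r k := min_le_left _ _
  have hmn : min (c.r k) (c.r n) ≤ c.r n := min_le_right _ _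
  have ht1 : (c.l n + min (c.r k) (c.r n)) / 2 ∈ Set.Ioo (c.l k) (c.r k) := by
    constructor
    · have := hk.1
      linarith
    · linarith
  have ht2 : (c.l n + min (c.r k) (c.r n)) / 2 ∈ Set.Ioo (c.l n) (c.r n) := by
    constructor
    · linarith
    · linarith
  exact Set.disjoint_left.1 (c.disj hkn) ht1 ht2

lemma FC.right_mem (n : ℕ) : c.r n ∈ F := by
  by_contra hl
  have hb := FC.bounds c n
  have hmem : c.r n ∈ Set.Icc (0:ℝ) 1 \ F :=
    ⟨⟨le_trans hb.1 (le_of_lt (c.lt n)), hb.2⟩, hl⟩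
  rw [← c.union] at hmem
  obtain ⟨k, hk⟩ := Set.mem_iUnion.1 hmem
  have hkn : k ≠ n := by
    rintro rfl
    exact lt_irrefl _ hk.2
  have h1 : max (c.l k) (c.l n) < c.r n := max_lt hk.1 (c.lt n)
  have hmk : c.l k ≤ max (c.l k) (c.l n) := le_max_left _ _
  have hmn : c.l n ≤ max (c.l k) (c.l n) := le_max_right _ _
  have ht1 : (max (c.l k) (c.l n) + c.r n) / 2 ∈ Set.Ioo (c.l k) (c.r k) := by
    constructor
    · linarith
    · have := hk.2
      linarith
  have ht2 : (max (c.l k) (c.l n) + c.r n) / 2 ∈ Set.Ioo (c.l n) (c.r n) := by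
    constructor
    · linarith
    · linarith
  exact Set.disjoint_left.1 (c.disj hkn) ht1 ht2

/-- Lemma A : at every point of `F` and every scale `σ ≤ 1` there is a complementary
interval inside `[x-σ, x+σ]` with length in `[lam σ, σ]`. -/
lemma FC.findI {lam : ℝ} (hlac : Lacunary c lam) {x σ : ℝ} (hx : x ∈ F)
    (h0 : 0 < σ) (h1 : σ ≤ 1) :
    ∃ n, Set.Ioo (c.l n) (c.r n) ⊆ Set.Icc (x - σ) (x + σ) ∧
      lam * σ ≤ c.len n ∧ c.len n ≤ σ := by
  obtain ⟨n, hsub, hlen⟩ := hlac x hx σ h0 h1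
  refine ⟨n, hsub, hlen, ?_⟩
  obtain ⟨hbl, hbr⟩ := ioo_sub_icc (c.lt n) hsub
  have hnx := FC.notMem c hx n
  have hx' : x ≤ c.l n ∨ c.r n ≤ x := by
    by_contra hcon
    push_neg at hcon
    exact hnx ⟨hcon.1, hcon.2⟩
  unfold FractalComplement.len
  rcases hx' with h | h
  · linarith
  · linarith

/-- counting disjoint complementary intervals of length `≥ δ` inside `[u,v]`. -/
lemma FC.count (s : Finset ℕ) (u v δ : ℝ) (hδ : 0 < δ) (huv : u ≤ v)
    (h : ∀ n ∈ s, Set.Ioo (c.l n) (c.r n) ⊆ Set.Icc u v ∧ δ ≤ c.len n) :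
    (s.card : ℝ) * δ ≤ v - u := by
  have hdisj : (↑s : Set ℕ).PairwiseDisjoint (fun n => Set.Ioo (c.l n) (c.r n)) :=
    fun m _ n _ hmn => c.disj hmn
  have hvol : (∑ n ∈ s, volume (Set.Ioo (c.l n) (c.r n)))
      = volume (⋃ n ∈ s, Set.Ioo (c.l n) (c.r n)) :=
    (measure_biUnion_finset hdisj (fun n _ => measurableSet_Ioo)).symm
  have hle : volume (⋃ n ∈ s, Set.Ioo (c.l n) (c.r n)) ≤ volume (Set.Icc u v) :=
    measure_mono (Set.iUnion₂_subset fun n hn => (h n hn).1)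
  have hsum : (∑ n ∈ s, ENNReal.ofReal (c.len n)) ≤ ENNReal.ofReal (v - u) := by
    calc (∑ n ∈ s, ENNReal.ofReal (c.len n))
        = ∑ n ∈ s, volume (Set.Ioo (c.l n) (c.r n)) := by
          refine Finset.sum_congr rfl fun n _ => ?_
          rw [Real.volume_Ioo]
          rfl
      _ ≤ volume (Set.Icc u v) := hvol ▸ hle
      _ = ENNReal.ofReal (v - u) := Real.volume_Icc
  have hsum2 : (∑ n ∈ s, c.len n) ≤ v - u := by
    have h1 : ENNReal.ofReal (∑ n ∈ s, c.len n)
        = ∑ n ∈ s, ENNReal.ofReal (c.len n) :=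
      ENNReal.ofReal_sum_of_nonneg fun n _ => (FC.len_pos c n).le
    have h2 : ENNReal.ofReal (∑ n ∈ s, c.len n) ≤ ENNReal.ofReal (v - u) :=
      h1 ▸ hsum
    exact (ENNReal.ofReal_le_ofReal_iff (by linarith)).1 h2
  calc (s.card : ℝ) * δ = ∑ _n ∈ s, δ := by rw [Finset.sum_const, nsmul_eq_mul]
    _ ≤ ∑ n ∈ s, c.len n := Finset.sum_le_sum fun n hn => (h n hn).2
    _ ≤ v - u := hsum2

lemma FC.band_finite {δ : ℝ} (hδ : 0 < δ) : {n : ℕ | δ ≤ c.len n}.Finite := by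
  by_contra hinf
  rw [← Set.Infinite] at hinf
  obtain ⟨s, hs, hcard⟩ := hinf.exists_subset_card_eq (⌊(1:ℝ)/δ⌋₊ + 1)
  have hc := FC.count c s 0 1 δ hδ zero_le_one (fun n hn => by
    refine ⟨(FC.Ioo_sub c n).trans Set.diff_subset, hs hn⟩)
  rw [hcard] at hc
  have hlt : (1:ℝ)/δ < (⌊(1:ℝ)/δ⌋₊ + 1 : ℕ) := by
    push_cast
    exact Nat.lt_floor_add_one _
  have hmul := mul_lt_mul_of_pos_right hlt hδ
  rw [div_mul_cancel₀ 1 hδ.ne'] at hmul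
  linarith

end FCHelpers
section MeasureHelpers

variable {F : Set ℝ} {μ : Measure ℝ}

lemma supp_pos (hsupp : HasSupport μ F) {x ε : ℝ} {J : Set ℝ} (hx : x ∈ F)
    (hε : 0 < ε) (h : Set.Ioo (x - ε) (x + ε) ⊆ J) : 0 < μ J :=
  lt_of_lt_of_le (hsupp.2 x hx ε hε) (measure_mono h)

lemma I_pos (c : FractalComplement F) (hsupp : HasSupport μ F) {a : ℝ} (ha : 0 < a)
    (n : ℕ) : 0 < μ (c.I a n) := by
  have hlen := FC.len_pos c n
  have hε : 0 < a * c.len n / 2 := by positivity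
  refine supp_pos hsupp (FC.left_mem c n) hε ?_
  unfold FractalComplement.I enlarge
  intro y hy
  obtain ⟨hy1, hy2⟩ := hy
  constructor
  · unfold FractalComplement.len at *
    linarith
  · unfold FractalComplement.len at *
    have := c.lt n
    linarith

lemma pos_meets (hsupp : HasSupport μ F) {s : Set ℝ} (h : 0 < μ s) :
    ∃ x, x ∈ F ∧ x ∈ s := by
  by_contra h'
  push_neg at h'
  have hsub : s ⊆ Fᶜ := fun y hy => fun hyF => h' y hyF hy
  have := measure_mono hsub (μ := μ)
  rw [hsupp.1] at this
  exact absurd (le_antisymm this zero_le) (ne_of_gt h)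

lemma cell_pos (hsupp : HasSupport μ F) {x R : ℝ} (hx : x ∈ F) (hR : 0 < R) :
    ∃ m : ℤ, ((m : ℝ) * R ≤ x ∧ x ≤ ((m : ℝ) + 1) * R) ∧
      0 < μ (Set.Icc ((m : ℝ) * R) (((m : ℝ) + 1) * R)) := by
  set m₀ : ℤ := ⌊x / R⌋ with hm₀
  have hx1 : (m₀ : ℝ) * R ≤ x := by
    have := Int.floor_le (x / R)
    calc (m₀ : ℝ) * R ≤ (x / R) * R := mul_le_mul_of_nonneg_right this hR.le
      _ = x := div_mul_cancel₀ x hR.ne'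
  have hx2 : x < ((m₀ : ℝ) + 1) * R := by
    have h1 := Int.lt_floor_add_one (x / R)
    have := mul_lt_mul_of_pos_right h1 hR
    rwa [div_mul_cancel₀ x hR.ne'] at this
  by_cases h : 0 < μ (Set.Icc ((m₀ : ℝ) * R) (((m₀ : ℝ) + 1) * R))
  · exact ⟨m₀, ⟨hx1, hx2.le⟩, h⟩
  · have hz : μ (Set.Icc ((m₀ : ℝ) * R) (((m₀ : ℝ) + 1) * R)) = 0 :=
      le_antisymm (not_lt.1 h) zero_le
    have hxeq : x = (m₀ : ℝ) * R := by
      by_contra hne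
      have hlt : (m₀ : ℝ) * R < x := lt_of_le_of_ne hx1 (Ne.symm hne)
      have hε : 0 < min (x - (m₀ : ℝ) * R) (((m₀ : ℝ) + 1) * R - x) :=
        lt_min (by linarith) (by linarith)
      have hsub : Set.Ioo (x - min (x - (m₀ : ℝ) * R) (((m₀ : ℝ) + 1) * R - x))
          (x + min (x - (m₀ : ℝ) * R) (((m₀ : ℝ) + 1) * R - x))
          ⊆ Set.Icc ((m₀ : ℝ) * R) (((m₀ : ℝ) + 1) * R) := by
        intro y hy
        obtain ⟨hy1, hy2⟩ := hy
        have h1 : min (x - (m₀ : ℝ) * R) (((m₀ : ℝ) + 1) * R - x) ≤ x - (m₀ : ℝ) * R :=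
          min_le_left _ _
        have h2 : min (x - (m₀ : ℝ) * R) (((m₀ : ℝ) + 1) * R - x)
            ≤ ((m₀ : ℝ) + 1) * R - x := min_le_right _ _
        exact ⟨by linarith, by linarith⟩
      exact absurd (supp_pos hsupp hx hε hsub) (by rw [hz]; exact lt_irrefl 0)
    refine ⟨m₀ - 1, ⟨?_, ?_⟩, ?_⟩
    · push_cast
      nlinarith
    · push_cast
      nlinarith
    · have hpos := hsupp.2 x hx R hR
      have hsub : Set.Ioo (x - R) (x + R) ⊆
          Set.Icc (((m₀ - 1 : ℤ) : ℝ) * R) ((((m₀ - 1 : ℤ) : ℝ) + 1) * R) ∪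
            Set.Icc ((m₀ : ℝ) * R) (((m₀ : ℝ) + 1) * R) := by
        intro y hy
        obtain ⟨hy1, hy2⟩ := hy
        rcases le_or_gt y x with h' | h'
        · left
          push_cast
          constructor
          · nlinarith
          · nlinarith
        · right
          constructor
          · nlinarith
          · nlinarith
      have hle2 : μ (Set.Ioo (x - R) (x + R)) ≤
          μ (Set.Icc (((m₀ - 1 : ℤ) : ℝ) * R) ((((m₀ - 1 : ℤ) : ℝ) + 1) * R)) +
            μ (Set.Icc ((m₀ : ℝ) * R) (((m₀ : ℝ) + 1) * R)) :=
        le_trans (measure_mono hsub) (measure_union_le _ _)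
      rw [hz, add_zero] at hle2
      exact lt_of_lt_of_le hpos hle2

end MeasureHelpers
section MainHelpers

variable {F : Set ℝ} {μ : Measure ℝ}

lemma grid_finite (hsupp : HasSupport μ F) (hF01 : F ⊆ Set.Icc 0 1) {R : ℝ} (hR : 0 < R) :
    {m : ℤ | 0 < μ (Set.Icc ((m : ℝ) * R) (((m : ℝ) + 1) * R))}.Finite := by
  refine Set.Finite.subset (Set.finite_Icc (-1 : ℤ) ⌈1/R⌉) ?_
  intro m hm
  obtain ⟨x, hxF, hx1, hx2⟩ : ∃ x, x ∈ F ∧ (m:ℝ)*R ≤ x ∧ x ≤ ((m:ℝ)+1)*R := by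
    obtain ⟨x, hxF, hxs⟩ := pos_meets hsupp hm
    exact ⟨x, hxF, hxs.1, hxs.2⟩
  obtain ⟨hx0, hx1'⟩ := hF01 hxF
  rw [Set.mem_Icc]
  constructor
  · have h1 : (0:ℝ) ≤ ((m:ℝ)+1) := by nlinarith
    have : (-1 : ℝ) ≤ (m : ℝ) := by linarith
    exact_mod_cast this
  · have h1 : (m:ℝ) ≤ 1/R := by
      rw [le_div_iff₀ hR]
      linarith
    have h2 : (m:ℝ) ≤ (⌈1/R⌉ : ℝ) := le_trans h1 (Int.le_ceil _)
    exact_mod_cast h2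

lemma meas_toReal_mono [IsProbabilityMeasure μ] {s t : Set ℝ} (h : s ⊆ t) :
    (μ s).toReal ≤ (μ t).toReal :=
  (ENNReal.toReal_le_toReal (measure_ne_top μ s) (measure_ne_top μ t)).2 (measure_mono h)

lemma meas_toReal_pos [IsProbabilityMeasure μ] {s : Set ℝ} (h : 0 < μ s) :
    0 < (μ s).toReal :=
  ENNReal.toReal_pos h.ne' (measure_ne_top μ s)

lemma lower_core (c : FractalComplement F) {lam : ℝ} [IsProbabilityMeasure μ]
    (hsupp : HasSupport μ F) (hF01 : F ⊆ Set.Icc 0 1) (hlam0 : 0 < lam)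
    {q a b η R : ℝ} (hη : 0 < η) (hR : 0 < R)
    (hkey : ∀ (n : ℕ) (m : ℤ), lam * η * R ≤ c.len n → c.len n ≤ η * R →
      (m:ℝ)*R ≤ c.l n → c.l n ≤ ((m:ℝ)+1)*R →
      0 < μ (Set.Icc ((m:ℝ)*R) (((m:ℝ)+1)*R)) →
      (μ (c.I a n)).toReal ^ q ≤ (μ (enlarge b ((m:ℝ)*R) (((m:ℝ)+1)*R))).toReal ^ q) :
    (lam * η / (1 + η)) * (∑' n : ℕ, if lam * η * R ≤ c.len n ∧ c.len n ≤ η * R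
        then (μ (c.I a n)).toReal ^ q else 0) ≤ gridSum μ b q R := by
  have hδ : 0 < lam * η * R := by positivity
  have hbandfin : {n : ℕ | lam * η * R ≤ c.len n ∧ c.len n ≤ η * R}.Finite :=
    (FC.band_finite c hδ).subset (fun n hn => hn.1)
  have hgfin := grid_finite hsupp hF01 hR
  have hb1 : (∑' n : ℕ, if lam * η * R ≤ c.len n ∧ c.len n ≤ η * R
      then (μ (c.I a n)).toReal ^ q else 0)
      = ∑ n ∈ hbandfin.toFinset, (μ (c.I a n)).toReal ^ q :=
    tsum_ite (fun n => lam * η * R ≤ c.len n ∧ c.len n ≤ η * R) hbandfin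
      (fun n => (μ (c.I a n)).toReal ^ q)
  have hb2 : gridSum μ b q R
      = ∑ m ∈ hgfin.toFinset, (μ (enlarge b ((m:ℝ)*R) (((m:ℝ)+1)*R))).toReal ^ q := by
    rw [gridSum]
    exact tsum_ite (fun m : ℤ => 0 < μ (Set.Icc ((m:ℝ)*R) (((m:ℝ)+1)*R))) hgfin
      (fun m => (μ (enlarge b ((m:ℝ)*R) (((m:ℝ)+1)*R))).toReal ^ q)
  rw [hb1, hb2]
  have hψex : ∀ n : ℕ, ∃ m : ℤ, n ∈ hbandfin.toFinset →
      ((m:ℝ)*R ≤ c.l n ∧ c.l n ≤ ((m:ℝ)+1)*R) ∧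
        0 < μ (Set.Icc ((m:ℝ)*R) (((m:ℝ)+1)*R)) := by
    intro n
    by_cases hn : n ∈ hbandfin.toFinset
    · obtain ⟨m, hm1, hm2⟩ := cell_pos hsupp (FC.left_mem c n) hR
      exact ⟨m, fun _ => ⟨hm1, hm2⟩⟩
    · exact ⟨0, fun h => absurd h hn⟩
  choose ψ hψ using hψex
  have hmain := map_sum_le hbandfin.toFinset hgfin.toFinset
    (fun n => (μ (c.I a n)).toReal ^ q)
    (fun m => (μ (enlarge b ((m:ℝ)*R) (((m:ℝ)+1)*R))).toReal ^ q) ψ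
    (fun n hn => hgfin.mem_toFinset.2 (hψ n hn).2)
    (fun n hn => by
      obtain ⟨hlen1, hlen2⟩ := hbandfin.mem_toFinset.1 hn
      obtain ⟨⟨hm1, hm2⟩, hpos⟩ := hψ n hn
      exact hkey n (ψ n) hlen1 hlen2 hm1 hm2 hpos)
    (fun m _ => Real.rpow_nonneg ENNReal.toReal_nonneg q)
    ((1 + η) / (lam * η))
    (fun m _ s' hs' hs'ψ => by
      have hcnt := FC.count c s'
        ((m:ℝ)*R) (((m:ℝ)+1)*R + η*R) (lam*η*R) hδ (by nlinarith)
        (fun n hn => by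
          have hnb := hs' hn
          have hnm := hs'ψ n hn
          obtain ⟨hlen1, hlen2⟩ := hbandfin.mem_toFinset.1 hnb
          obtain ⟨⟨hm1, hm2⟩, _⟩ := hψ n hnb
          rw [hnm] at hm1 hm2
          constructor
          · intro y hy
            obtain ⟨hy1, hy2⟩ := hy
            have hry : c.r n = c.l n + c.len n := by
              unfold FractalComplement.len; ring
            constructor
            · linarith
            · rw [hry] at hy2
              linarith
          · exact hlen1)
      have hveq : ((m:ℝ)+1)*R + η*R - (m:ℝ)*R = (1+η)*R := by ring
      rw [hveq] at hcnt
      rw [le_div_iff₀ (by positivity)]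
      have hN : (s'.card : ℝ) * (lam * η) * R ≤ (1 + η) * R := by
        calc (s'.card : ℝ) * (lam * η) * R = (s'.card : ℝ) * (lam * η * R) := by ring
          _ ≤ (1 + η) * R := hcnt
      exact le_of_mul_le_mul_right hN hR)
  have hM0 : (0:ℝ) < (1 + η) / (lam * η) := by positivity
  have hc : lam * η / (1 + η) * ((1 + η) / (lam * η)) = 1 := by
    field_simp
  calc (lam * η / (1 + η)) * ∑ n ∈ hbandfin.toFinset, (μ (c.I a n)).toReal ^ q
      ≤ (lam * η / (1 + η)) * ((1 + η) / (lam * η) *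
          ∑ m ∈ hgfin.toFinset, (μ (enlarge b ((m:ℝ)*R) (((m:ℝ)+1)*R))).toReal ^ q) :=
        mul_le_mul_of_nonneg_left hmain (by positivity)
    _ = ∑ m ∈ hgfin.toFinset, (μ (enlarge b ((m:ℝ)*R) (((m:ℝ)+1)*R))).toReal ^ q := by
        rw [← mul_assoc, hc, one_mul]

end MainHelpers
section UpperNeg

variable {F : Set ℝ} {μ : Measure ℝ}

lemma upper_core_neg (c : FractalComplement F) {lam : ℝ} [IsProbabilityMeasure μ]
    (hsupp : HasSupport μ F) (hF01 : F ⊆ Set.Icc 0 1) (hlam0 : 0 < lam)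
    {q a b η R : ℝ} (hη : 0 < η) (hR : 0 < R)
    (hkey : ∀ m : ℤ, 0 < μ (Set.Icc ((m:ℝ)*R) (((m:ℝ)+1)*R)) → ∃ n : ℕ,
      (lam * η * R ≤ c.len n ∧ c.len n ≤ η * R) ∧
      (μ (enlarge b ((m:ℝ)*R) (((m:ℝ)+1)*R))).toReal ^ q ≤ (μ (c.I a n)).toReal ^ q ∧
      (m:ℝ)*R - η*R ≤ c.l n ∧ c.r n ≤ ((m:ℝ)+1)*R + η*R) :
    gridSum μ b q R ≤ (2*η + 2) * (∑' n : ℕ, if lam * η * R ≤ c.len n ∧ c.len n ≤ η * R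
        then (μ (c.I a n)).toReal ^ q else 0) := by
  have hδ : 0 < lam * η * R := by positivity
  have hbandfin : {n : ℕ | lam * η * R ≤ c.len n ∧ c.len n ≤ η * R}.Finite :=
    (FC.band_finite c hδ).subset (fun n hn => hn.1)
  have hgfin := grid_finite hsupp hF01 hR
  have hb1 : (∑' n : ℕ, if lam * η * R ≤ c.len n ∧ c.len n ≤ η * R
      then (μ (c.I a n)).toReal ^ q else 0)
      = ∑ n ∈ hbandfin.toFinset, (μ (c.I a n)).toReal ^ q :=
    tsum_ite (fun n => lam * η * R ≤ c.len n ∧ c.len n ≤ η * R) hbandfin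
      (fun n => (μ (c.I a n)).toReal ^ q)
  have hb2 : gridSum μ b q R
      = ∑ m ∈ hgfin.toFinset, (μ (enlarge b ((m:ℝ)*R) (((m:ℝ)+1)*R))).toReal ^ q := by
    rw [gridSum]
    exact tsum_ite (fun m : ℤ => 0 < μ (Set.Icc ((m:ℝ)*R) (((m:ℝ)+1)*R))) hgfin
      (fun m => (μ (enlarge b ((m:ℝ)*R) (((m:ℝ)+1)*R))).toReal ^ q)
  rw [hb1, hb2]
  have hφex : ∀ m : ℤ, ∃ n : ℕ, m ∈ hgfin.toFinset →
      ((lam * η * R ≤ c.len n ∧ c.len n ≤ η * R) ∧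
      (μ (enlarge b ((m:ℝ)*R) (((m:ℝ)+1)*R))).toReal ^ q ≤ (μ (c.I a n)).toReal ^ q ∧
      (m:ℝ)*R - η*R ≤ c.l n ∧ c.r n ≤ ((m:ℝ)+1)*R + η*R) := by
    intro m
    by_cases hm : m ∈ hgfin.toFinset
    · obtain ⟨n, hn⟩ := hkey m (hgfin.mem_toFinset.1 hm)
      exact ⟨n, fun _ => hn⟩
    · exact ⟨0, fun h => absurd h hm⟩
  choose φ hφ using hφex
  refine map_sum_le hgfin.toFinset hbandfin.toFinset
    (fun m => (μ (enlarge b ((m:ℝ)*R) (((m:ℝ)+1)*R))).toReal ^ q)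
    (fun n => (μ (c.I a n)).toReal ^ q) φ
    (fun m hm => hbandfin.mem_toFinset.2 (hφ m hm).1)
    (fun m hm => (hφ m hm).2.1)
    (fun n _ => Real.rpow_nonneg ENNReal.toReal_nonneg q)
    (2*η + 2)
    (fun n _ s' hs' hs'φ => ?_)
  have hbnd : ∀ m ∈ s', (c.l n - η*R)/R - 1 ≤ (m:ℝ) ∧ (m:ℝ) ≤ (c.l n + η*R)/R := by
    intro m hm
    obtain ⟨_, _, hp1, hp2⟩ := hφ m (hs' hm)
    rw [hs'φ m hm] at hp1 hp2
    constructor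
    · have h1 : (c.r n - η*R)/R ≤ (m:ℝ) + 1 := by
        rw [div_le_iff₀ hR]
        linarith
      have h2 : (c.l n - η*R)/R ≤ (c.r n - η*R)/R :=
        (div_le_div_iff_of_pos_right hR).2 (by linarith [c.lt n])
      linarith
    · rw [le_div_iff₀ hR]
      linarith
  have hxy : (c.l n - η*R)/R - 1 ≤ (c.l n + η*R)/R := by
    have h2 : (c.l n - η*R)/R ≤ (c.l n + η*R)/R :=
      (div_le_div_iff_of_pos_right hR).2 (by nlinarith)
    linarith
  have hcard := int_count s' _ _ hxy hbnd
  have heq : (c.l n + η*R)/R - ((c.l n - η*R)/R - 1) + 1 = 2*η + 2 := by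
    field_simp
    ring
  rw [heq] at hcard
  exact hcard

end UpperNeg
section UpperPos

variable {F : Set ℝ} {μ : Measure ℝ}

lemma upper_core_pos (c : FractalComplement F) {lam : ℝ} [IsProbabilityMeasure μ]
    (hlac : Lacunary c lam) (hsupp : HasSupport μ F) (hF01 : F ⊆ Set.Icc 0 1)
    (hlam0 : 0 < lam) {q a b R : ℝ} (ha : 2 / lam ≤ a) (hb : 0 < b) (hq : 0 ≤ q)
    (hR : 0 < R) (hR1 : R ≤ 1) :
    gridSum μ b q R ≤ (((3 + b)/lam) ^ q * (4 + b)) *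
      (∑' n : ℕ, if lam * 1 * R ≤ c.len n ∧ c.len n ≤ 1 * R
        then (μ (c.I a n)).toReal ^ q else 0) := by
  have ha0 : 0 < a := lt_of_lt_of_le (by positivity) ha
  have hδ : 0 < lam * 1 * R := by positivity
  have hbandfin : {n : ℕ | lam * 1 * R ≤ c.len n ∧ c.len n ≤ 1 * R}.Finite :=
    (FC.band_finite c hδ).subset (fun n hn => hn.1)
  have hgfin := grid_finite hsupp hF01 hR
  have hb1 : (∑' n : ℕ, if lam * 1 * R ≤ c.len n ∧ c.len n ≤ 1 * R
      then (μ (c.I a n)).toReal ^ q else 0)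
      = ∑ n ∈ hbandfin.toFinset, (μ (c.I a n)).toReal ^ q :=
    tsum_ite (fun n => lam * 1 * R ≤ c.len n ∧ c.len n ≤ 1 * R) hbandfin
      (fun n => (μ (c.I a n)).toReal ^ q)
  have hb2 : gridSum μ b q R
      = ∑ m ∈ hgfin.toFinset, (μ (enlarge b ((m:ℝ)*R) (((m:ℝ)+1)*R))).toReal ^ q := by
    rw [gridSum]
    exact tsum_ite (fun m : ℤ => 0 < μ (Set.Icc ((m:ℝ)*R) (((m:ℝ)+1)*R))) hgfin
      (fun m => (μ (enlarge b ((m:ℝ)*R) (((m:ℝ)+1)*R))).toReal ^ q)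
  rw [hb1, hb2]
  have hK0 : (0:ℝ) < (3 + b)/lam := by positivity
  set N : ℤ → Finset ℕ := fun m => hbandfin.toFinset.filter
    (fun n => Set.Ioo (c.l n) (c.r n) ⊆
      Set.Icc ((m:ℝ)*R - b*R/2 - R) (((m:ℝ)+1)*R + b*R/2 + R)) with hNdef
  have hper : ∀ m ∈ hgfin.toFinset,
      (μ (enlarge b ((m:ℝ)*R) (((m:ℝ)+1)*R))).toReal ^ q
        ≤ ((3 + b)/lam) ^ q * ∑ n ∈ N m, (μ (c.I a n)).toReal ^ q := by
    intro m hm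
    have hBpos : 0 < μ (Set.Icc ((m:ℝ)*R) (((m:ℝ)+1)*R)) := hgfin.mem_toFinset.1 hm
    have hJeq : enlarge b ((m:ℝ)*R) (((m:ℝ)+1)*R)
        = Set.Icc ((m:ℝ)*R - b*R/2) (((m:ℝ)+1)*R + b*R/2) := by
      unfold enlarge
      congr 1 <;> ring
    have hJpos : 0 < μ (enlarge b ((m:ℝ)*R) (((m:ℝ)+1)*R)) := by
      refine lt_of_lt_of_le hBpos (measure_mono ?_)
      rw [hJeq]
      exact Set.Icc_subset_Icc (by nlinarith) (by nlinarith)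
    have hcov : F ∩ enlarge b ((m:ℝ)*R) (((m:ℝ)+1)*R) ⊆ ⋃ n ∈ N m, c.I a n := by
      intro y hy
      obtain ⟨hyF, hyJ⟩ := hy
      rw [hJeq] at hyJ
      obtain ⟨hyl, hyr⟩ := hyJ
      obtain ⟨n, hsub, hl1, hl2⟩ := FC.findI c hlac hyF hR hR1
      obtain ⟨hbl, hbr⟩ := ioo_sub_icc (c.lt n) hsub
      have hlen' : c.len n = c.r n - c.l n := rfl
      have halen : 2 * R ≤ a * c.len n := by
        have h1 : 2/lam * (lam * R) ≤ 2/lam * c.len n :=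
          mul_le_mul_of_nonneg_left hl1 (by positivity)
        have h2 : 2/lam * (lam * R) = 2 * R := by field_simp
        have h3 : 2/lam * c.len n ≤ a * c.len n :=
          mul_le_mul_of_nonneg_right ha (by linarith [FC.len_pos c n])
        linarith
      have hnN : n ∈ N m := by
        refine Finset.mem_filter.2 ⟨hbandfin.mem_toFinset.2 ⟨?_, ?_⟩, ?_⟩
        · rw [mul_one]
          exact hl1
        · rw [one_mul]
          exact hl2
        · intro z hz
          have hz' := hsub hz
          exact ⟨by linarith [hz'.1], by linarith [hz'.2]⟩
      refine Set.mem_biUnion hnN ?_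
      · show y ∈ Set.Icc (c.l n - a * (c.r n - c.l n) / 2) (c.r n + a * (c.r n - c.l n) / 2)
        have hltn := c.lt n
        constructor
        · rw [← hlen']
          linarith
        · rw [← hlen']
          linarith
    have hμJle : μ (enlarge b ((m:ℝ)*R) (((m:ℝ)+1)*R)) ≤ ∑ n ∈ N m, μ (c.I a n) := by
      calc μ (enlarge b ((m:ℝ)*R) (((m:ℝ)+1)*R))
          ≤ μ ((F ∩ enlarge b ((m:ℝ)*R) (((m:ℝ)+1)*R)) ∪ Fᶜ) := measure_mono (fun y hy => by
            by_cases hyF : y ∈ F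
            · exact Or.inl ⟨hyF, hy⟩
            · exact Or.inr hyF)
        _ ≤ μ (F ∩ enlarge b ((m:ℝ)*R) (((m:ℝ)+1)*R)) + μ Fᶜ := measure_union_le _ _
        _ = μ (F ∩ enlarge b ((m:ℝ)*R) (((m:ℝ)+1)*R)) := by rw [hsupp.1, add_zero]
        _ ≤ μ (⋃ n ∈ N m, c.I a n) := measure_mono hcov
        _ ≤ ∑ n ∈ N m, μ (c.I a n) := measure_biUnion_finset_le _ _
    have hsumne : (∑ n ∈ N m, μ (c.I a n)) ≠ ⊤ :=
      (ENNReal.sum_lt_top.2 fun n _ => measure_lt_top μ _).ne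
    have hTle : (μ (enlarge b ((m:ℝ)*R) (((m:ℝ)+1)*R))).toReal
        ≤ ∑ n ∈ N m, (μ (c.I a n)).toReal := by
      have h1 := (ENNReal.toReal_le_toReal (measure_ne_top μ _) hsumne).2 hμJle
      rwa [ENNReal.toReal_sum (fun n _ => measure_ne_top μ _)] at h1
    have hNne : (N m).Nonempty := by
      rcases Finset.eq_empty_or_nonempty (N m) with he | h
      · exfalso
        rw [he, Finset.sum_empty] at hTle
        exact absurd hTle (not_le.2 (meas_toReal_pos hJpos))
      · exact h
    obtain ⟨n₀, hn₀, hmax⟩ :=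
      Finset.exists_max_image (N m) (fun n => (μ (c.I a n)).toReal) hNne
    have hcard : ((N m).card : ℝ) ≤ (3 + b)/lam := by
      have hcnt := FC.count c (N m) ((m:ℝ)*R - b*R/2 - R) (((m:ℝ)+1)*R + b*R/2 + R)
        (lam * 1 * R) hδ (by nlinarith)
        (fun n hn => ⟨(Finset.mem_filter.1 hn).2,
          (hbandfin.mem_toFinset.1 (Finset.mem_filter.1 hn).1).1⟩)
      have hveq : ((m:ℝ)+1)*R + b*R/2 + R - ((m:ℝ)*R - b*R/2 - R) = (3+b)*R := by ring
      rw [hveq] at hcnt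
      rw [le_div_iff₀ hlam0]
      have h2 : ((N m).card : ℝ) * lam * R ≤ (3+b)*R := by
        calc ((N m).card:ℝ) * lam * R = ((N m).card:ℝ) * (lam * 1 * R) := by ring
          _ ≤ (3+b)*R := hcnt
      exact le_of_mul_le_mul_right h2 hR
    have hKmax : (μ (enlarge b ((m:ℝ)*R) (((m:ℝ)+1)*R))).toReal
        ≤ ((3 + b)/lam) * (μ (c.I a n₀)).toReal := by
      calc (μ (enlarge b ((m:ℝ)*R) (((m:ℝ)+1)*R))).toReal
          ≤ ∑ n ∈ N m, (μ (c.I a n)).toReal := hTle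
        _ ≤ (N m).card • (μ (c.I a n₀)).toReal :=
            Finset.sum_le_card_nsmul _ _ _ (fun n hn => hmax n hn)
        _ = ((N m).card : ℝ) * (μ (c.I a n₀)).toReal := nsmul_eq_mul _ _
        _ ≤ ((3 + b)/lam) * (μ (c.I a n₀)).toReal :=
            mul_le_mul_of_nonneg_right hcard ENNReal.toReal_nonneg
    calc (μ (enlarge b ((m:ℝ)*R) (((m:ℝ)+1)*R))).toReal ^ q
        ≤ (((3 + b)/lam) * (μ (c.I a n₀)).toReal) ^ q :=
          Real.rpow_le_rpow ENNReal.toReal_nonneg hKmax hq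
      _ = ((3 + b)/lam) ^ q * (μ (c.I a n₀)).toReal ^ q :=
          Real.mul_rpow hK0.le ENNReal.toReal_nonneg
      _ ≤ ((3 + b)/lam) ^ q * ∑ n ∈ N m, (μ (c.I a n)).toReal ^ q := by
          refine mul_le_mul_of_nonneg_left ?_ (Real.rpow_nonneg hK0.le q)
          exact Finset.single_le_sum (f := fun n => (μ (c.I a n)).toReal ^ q)
            (fun n _ => Real.rpow_nonneg ENNReal.toReal_nonneg q) hn₀
  calc ∑ m ∈ hgfin.toFinset, (μ (enlarge b ((m:ℝ)*R) (((m:ℝ)+1)*R))).toReal ^ q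
      ≤ ∑ m ∈ hgfin.toFinset, ((3 + b)/lam) ^ q * ∑ n ∈ N m, (μ (c.I a n)).toReal ^ q :=
        Finset.sum_le_sum hper
    _ = ((3 + b)/lam) ^ q *
        ∑ m ∈ hgfin.toFinset, ∑ n ∈ N m, (μ (c.I a n)).toReal ^ q :=
        (Finset.mul_sum _ _ _).symm
    _ ≤ ((3 + b)/lam) ^ q *
        ((4 + b) * ∑ n ∈ hbandfin.toFinset, (μ (c.I a n)).toReal ^ q) := by
        refine mul_le_mul_of_nonneg_left ?_ (Real.rpow_nonneg hK0.le q)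
        refine double_sum_le hgfin.toFinset hbandfin.toFinset N _
          (fun m _ => Finset.filter_subset _ _)
          (fun n _ => Real.rpow_nonneg ENNReal.toReal_nonneg q) (4 + b)
          (fun n hn G' hG' hG'N => ?_)
        have hbnd : ∀ m ∈ G', (c.l n - b*R/2 - R)/R - 1 ≤ (m:ℝ) ∧
            (m:ℝ) ≤ (c.l n + b*R/2 + R)/R := by
          intro m hm
          have hsubm := (Finset.mem_filter.1 (hG'N m hm)).2
          obtain ⟨hbl, hbr⟩ := ioo_sub_icc (c.lt n) hsubm
          constructor
          · have h1 : (c.r n - b*R/2 - R)/R ≤ (m:ℝ) + 1 := by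
              rw [div_le_iff₀ hR]
              linarith
            have h2 : (c.l n - b*R/2 - R)/R ≤ (c.r n - b*R/2 - R)/R :=
              (div_le_div_iff_of_pos_right hR).2 (by linarith [c.lt n])
            linarith
          · rw [le_div_iff₀ hR]
            linarith
        have hxy : (c.l n - b*R/2 - R)/R - 1 ≤ (c.l n + b*R/2 + R)/R := by
          have h2 : (c.l n - b*R/2 - R)/R ≤ (c.l n + b*R/2 + R)/R :=
            (div_le_div_iff_of_pos_right hR).2 (by nlinarith)
          linarith
        have hcard2 := int_count G' _ _ hxy hbnd
        have heq : (c.l n + b*R/2 + R)/R - ((c.l n - b*R/2 - R)/R - 1) + 1 = 4 + b := by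
          field_simp
          ring
        rw [heq] at hcard2
        exact hcard2
    _ = (((3 + b)/lam) ^ q * (4 + b)) *
        ∑ n ∈ hbandfin.toFinset, (μ (c.I a n)).toReal ^ q := by ring

end UpperPos
/-- comparison of grid moment sums with moment sums over the enlarged
complementary intervals of comparable length (Proposition 4.3 of the paper). -/
theorem stmt_10 (F : Set ℝ) (hF : IsFractalSubset F) (c : FractalComplement F)
    (lam : ℝ) (hlam0 : 0 < lam) (hlam1 : lam ≤ 1) (hlac : Lacunary c lam)
    (μ : Measure ℝ) [IsProbabilityMeasure μ] [NullSingletonClass μ] (hsupp : HasSupport μ F)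
    (q a b : ℝ) (ha : 2 / lam ≤ a) (hb : 0 < b) :
    ∃ η₁ η₂ c₁ c₂ r₀ : ℝ, 0 < η₁ ∧ 0 < η₂ ∧ 0 < c₁ ∧ 0 < c₂ ∧ 0 < r₀ ∧
      ∀ R : ℝ, 0 < R → R ≤ r₀ →
        c₁ * (∑' n : ℕ, if lam * η₁ * R ≤ c.len n ∧ c.len n ≤ η₁ * R
                then (μ (c.I a n)).toReal ^ q else 0) ≤ gridSum μ b q R ∧
        gridSum μ b q R ≤
          c₂ * (∑' n : ℕ, if lam * η₂ * R ≤ c.len n ∧ c.len n ≤ η₂ * R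
                then (μ (c.I a n)).toReal ^ q else 0) := by
  obtain ⟨hFc, hF01, hF0, hF1, hFvol⟩ := hF
  have ha2 : (2:ℝ) ≤ a := by
    refine le_trans ?_ ha
    rw [le_div_iff₀ hlam0]
    nlinarith
  have ha0 : (0:ℝ) < a := by linarith
  rcases le_or_gt 0 q with hq | hq
  · -- q ≥ 0
    refine ⟨b/(2+a), 1, lam * (b/(2+a)) / (1 + b/(2+a)), ((3+b)/lam)^q * (4+b), 1,
      by positivity, one_pos, by positivity,
      mul_pos (Real.rpow_pos_of_pos (by positivity) q) (by linarith), one_pos, ?_⟩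
    intro R hR0 hR1
    constructor
    · refine lower_core c hsupp hF01 hlam0 (by positivity) hR0 ?_
      intro n m hlen1 hlen2 hm1 hm2 hpos
      have hsub : c.I a n ⊆ enlarge b ((m:ℝ)*R) (((m:ℝ)+1)*R) := by
        have hJeq : enlarge b ((m:ℝ)*R) (((m:ℝ)+1)*R)
            = Set.Icc ((m:ℝ)*R - b*R/2) (((m:ℝ)+1)*R + b*R/2) := by
          show Set.Icc _ _ = _
          congr 1 <;> ring
        rw [hJeq]
        show Set.Icc (c.l n - a*(c.r n - c.l n)/2) (c.r n + a*(c.r n - c.l n)/2) ⊆ _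
        have hlen' : c.len n = c.r n - c.l n := rfl
        have hkey2 : (2+a) * c.len n ≤ b * R := by
          have h1 : (2+a) * c.len n ≤ (2+a) * (b/(2+a)*R) :=
            mul_le_mul_of_nonneg_left hlen2 (by linarith)
          have he : (2+a) * (b/(2+a)*R) = b * R := by
            field_simp
          linarith
        have hlp := FC.len_pos c n
        apply Set.Icc_subset_Icc
        · rw [← hlen']
          nlinarith
        · rw [← hlen']
          nlinarith
      have hmono := meas_toReal_mono (μ := μ) hsub
      exact Real.rpow_le_rpow ENNReal.toReal_nonneg hmono hq
    · exact upper_core_pos c hlac hsupp hF01 hlam0 ha hb hq hR0 hR1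
  · -- q < 0
    have hη₁ : 0 < (2+b)/(a*lam) := by positivity
    have hη₂ : 0 < b/(2+a) := by positivity
    refine ⟨(2+b)/(a*lam), b/(2+a), lam * ((2+b)/(a*lam)) / (1 + (2+b)/(a*lam)),
      2*(b/(2+a)) + 2, min 1 ((2+a)/b),
      hη₁, hη₂, by positivity, by positivity, lt_min one_pos (by positivity), ?_⟩
    intro R hR0 hRr
    have hR1 : R ≤ 1 := le_trans hRr (min_le_left _ _)
    have hσ1 : b/(2+a) * R ≤ 1 := by
      have h2 : R ≤ (2+a)/b := le_trans hRr (min_le_right _ _)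
      calc b/(2+a) * R ≤ b/(2+a) * ((2+a)/b) := mul_le_mul_of_nonneg_left h2 hη₂.le
        _ = 1 := by
          field_simp
    constructor
    · refine lower_core c hsupp hF01 hlam0 hη₁ hR0 ?_
      intro n m hlen1 hlen2 hm1 hm2 hpos
      have hsub : enlarge b ((m:ℝ)*R) (((m:ℝ)+1)*R) ⊆ c.I a n := by
        have hJeq : enlarge b ((m:ℝ)*R) (((m:ℝ)+1)*R)
            = Set.Icc ((m:ℝ)*R - b*R/2) (((m:ℝ)+1)*R + b*R/2) := by
          show Set.Icc _ _ = _
          congr 1 <;> ring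
        rw [hJeq]
        show _ ⊆ Set.Icc (c.l n - a*(c.r n - c.l n)/2) (c.r n + a*(c.r n - c.l n)/2)
        have hlen' : c.len n = c.r n - c.l n := rfl
        have hkey2 : (2+b) * R ≤ a * c.len n := by
          have h1 : a * (lam * ((2+b)/(a*lam)) * R) ≤ a * c.len n :=
            mul_le_mul_of_nonneg_left hlen1 ha0.le
          have he : a * (lam * ((2+b)/(a*lam)) * R) = (2+b) * R := by
            field_simp
          linarith
        have hlp := FC.len_pos c n
        apply Set.Icc_subset_Icc
        · rw [← hlen']
          linarith
        · rw [← hlen']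
          linarith
      have hBJ : Set.Icc ((m:ℝ)*R) (((m:ℝ)+1)*R) ⊆ enlarge b ((m:ℝ)*R) (((m:ℝ)+1)*R) := by
        have hJeq : enlarge b ((m:ℝ)*R) (((m:ℝ)+1)*R)
            = Set.Icc ((m:ℝ)*R - b*R/2) (((m:ℝ)+1)*R + b*R/2) := by
          show Set.Icc _ _ = _
          congr 1 <;> ring
        rw [hJeq]
        exact Set.Icc_subset_Icc (by nlinarith) (by nlinarith)
      have hpos2 : 0 < μ (enlarge b ((m:ℝ)*R) (((m:ℝ)+1)*R)) :=
        lt_of_lt_of_le hpos (measure_mono hBJ)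
      exact Real.rpow_le_rpow_of_nonpos (meas_toReal_pos hpos2)
        (meas_toReal_mono hsub) hq.le
    · refine upper_core_neg c hsupp hF01 hlam0 hη₂ hR0 ?_
      intro m hpos
      obtain ⟨x, hxF, hxB⟩ := pos_meets hsupp hpos
      obtain ⟨hx1, hx2⟩ := hxB
      obtain ⟨n, hsub, hl1, hl2⟩ := FC.findI c hlac hxF
        (show (0:ℝ) < b/(2+a) * R by positivity) hσ1
      obtain ⟨hbl, hbr⟩ := ioo_sub_icc (c.lt n) hsub
      refine ⟨n, ⟨?_, hl2⟩, ?_, by linarith, by linarith⟩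
      · rw [mul_assoc]
        exact hl1
      · have hIsub : c.I a n ⊆ enlarge b ((m:ℝ)*R) (((m:ℝ)+1)*R) := by
          have hJeq : enlarge b ((m:ℝ)*R) (((m:ℝ)+1)*R)
              = Set.Icc ((m:ℝ)*R - b*R/2) (((m:ℝ)+1)*R + b*R/2) := by
            show Set.Icc _ _ = _
            congr 1 <;> ring
          rw [hJeq]
          show Set.Icc (c.l n - a*(c.r n - c.l n)/2) (c.r n + a*(c.r n - c.l n)/2) ⊆ _
          have hlen' : c.len n = c.r n - c.l n := rfl
          have hkey2 : a * c.len n ≤ a * (b/(2+a) * R) :=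
            mul_le_mul_of_nonneg_left hl2 ha0.le
          have he : (2+a) * (b/(2+a) * R) = b * R := by
            field_simp
          have hlp := FC.len_pos c n
          apply Set.Icc_subset_Icc
          · rw [← hlen']
            nlinarith
          · rw [← hlen']
            nlinarith
        exact Real.rpow_le_rpow_of_nonpos (meas_toReal_pos (I_pos c hsupp ha0 n))
          (meas_toReal_mono hIsub) hq.le
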